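/- There exists a constant C > 0, independent of h, the center of K, u and w, such that for every h > 0, every square K of half side h, every function u of class C⁴ on a neighborhood of K, and every w in the shape space P(K) = P₂(K) + span{x₁³, x₂³}, the contribution of the second normal derivatives on the pair of opposite vertical edges satisfies |∫_{x₂c−h}^{x₂c+h} [ (∂²u/∂x₁²)(x₁c+h, x₂) · (R⁰_{e₂}(∂w/∂x₁))(x₂) − (∂²u/∂x₁²)(x₁c−h, x₂) · (R⁰_{e₄}(∂w/∂x₁))(x₂) ] dx₂| ≤ C h² |u|_{H⁴(K)} |w|_{H²(K)}. -/

import Mathlib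

open MeasureTheory

/-- Partial derivative in the first variable of a curried function on `ℝ²`. -/
noncomputable def pdx (f : ℝ → ℝ → ℝ) : ℝ → ℝ → ℝ := fun x y => deriv (fun t => f t y) x

/-- Partial derivative in the second variable of a curried function on `ℝ²`. -/
noncomputable def pdy (f : ℝ → ℝ → ℝ) : ℝ → ℝ → ℝ := fun x y => deriv (fun t => f x t) y

/-- Membership in the shape space `P(K) = P₂(K) + span{x₁³, x₂³}` of the two-dimensional
rectangular Morley element. -/
def MorleyShape2 (w : ℝ → ℝ → ℝ) : Prop :=
  ∃ c0 c1 c2 c3 c4 c5 c6 c7 : ℝ, ∀ x y : ℝ,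
    w x y = c0 + c1 * x + c2 * y + c3 * x ^ 2 + c4 * (x * y) + c5 * y ^ 2
      + c6 * x ^ 3 + c7 * y ^ 3

/-- The `H²` seminorm of `v` on the rectangle `[a,b] × [c,d]`, each ordering of mixed
partial derivatives counted. -/
noncomputable def semiH2R (v : ℝ → ℝ → ℝ) (a b c d : ℝ) : ℝ :=
  Real.sqrt (∫ x in a..b, ∫ y in c..d,
    (pdx (pdx v) x y) ^ 2 + (pdx (pdy v) x y) ^ 2 + (pdy (pdx v) x y) ^ 2
      + (pdy (pdy v) x y) ^ 2)

/-- The `H⁴` seminorm of `u` on the rectangle `[a,b] × [c,d]`, each ordering of mixed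
partial derivatives counted (hence the binomial coefficients). -/
noncomputable def semiH4R (u : ℝ → ℝ → ℝ) (a b c d : ℝ) : ℝ :=
  Real.sqrt (∫ x in a..b, ∫ y in c..d,
    (pdx (pdx (pdx (pdx u))) x y) ^ 2 + 4 * (pdx (pdx (pdx (pdy u))) x y) ^ 2
      + 6 * (pdx (pdx (pdy (pdy u))) x y) ^ 2 + 4 * (pdx (pdy (pdy (pdy u))) x y) ^ 2
      + (pdy (pdy (pdy (pdy u))) x y) ^ 2)

/-- `u` is of class `C⁴` on a neighborhood of the rectangle `[a,b] × [c,d]`. -/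
def C4Near (u : ℝ → ℝ → ℝ) (a b c d : ℝ) : Prop :=
  ∃ U : Set (ℝ × ℝ), IsOpen U ∧ Set.Icc a b ×ˢ Set.Icc c d ⊆ U ∧
    ContDiffOn ℝ 4 (fun p : ℝ × ℝ => u p.1 p.2) U

namespace Stmt6Aux

noncomputable def Dx (G : ℝ × ℝ → ℝ) : ℝ × ℝ → ℝ := fun p => fderiv ℝ G p (1, 0)
noncomputable def Dy (G : ℝ × ℝ → ℝ) : ℝ × ℝ → ℝ := fun p => fderiv ℝ G p (0, 1)

lemma hasDerivAt_sliceX {G : ℝ × ℝ → ℝ} {x y : ℝ} (hG : DifferentiableAt ℝ G (x, y)) :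
    HasDerivAt (fun t => G (t, y)) (Dx G (x, y)) x := by
  have h1 : HasDerivAt (fun t : ℝ => ((t, y) : ℝ × ℝ)) (1, 0) x :=
    (hasDerivAt_id x).prodMk (hasDerivAt_const x y)
  exact (hG.hasFDerivAt.comp_hasDerivAt x h1)

lemma hasDerivAt_sliceY {G : ℝ × ℝ → ℝ} {x y : ℝ} (hG : DifferentiableAt ℝ G (x, y)) :
    HasDerivAt (fun t => G (x, t)) (Dy G (x, y)) y := by
  have h1 : HasDerivAt (fun t : ℝ => ((x, t) : ℝ × ℝ)) (0, 1) y :=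
    (hasDerivAt_const y x).prodMk (hasDerivAt_id y)
  exact (hG.hasFDerivAt.comp_hasDerivAt y h1)

lemma pdx_rep {U : Set (ℝ × ℝ)} (hU : IsOpen U) {f : ℝ → ℝ → ℝ} {G : ℝ × ℝ → ℝ}
    (heq : ∀ p ∈ U, f p.1 p.2 = G p) (hG : DifferentiableOn ℝ G U)
    {x y : ℝ} (hp : (x, y) ∈ U) : pdx f x y = Dx G (x, y) := by
  have hopen : IsOpen {t : ℝ | (t, y) ∈ U} := hU.preimage (by fun_prop)
  have hev : (fun t => f t y) =ᶠ[nhds x] fun t => G (t, y) := by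
    filter_upwards [hopen.mem_nhds (by exact hp)] with t ht
    exact heq (t, y) ht
  have hd := (hasDerivAt_sliceX (hG.differentiableAt (hU.mem_nhds hp))).deriv
  show deriv (fun t => f t y) x = Dx G (x, y)
  rw [hev.deriv_eq, hd]

lemma pdy_rep {U : Set (ℝ × ℝ)} (hU : IsOpen U) {f : ℝ → ℝ → ℝ} {G : ℝ × ℝ → ℝ}
    (heq : ∀ p ∈ U, f p.1 p.2 = G p) (hG : DifferentiableOn ℝ G U)
    {x y : ℝ} (hp : (x, y) ∈ U) : pdy f x y = Dy G (x, y) := by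
  have hopen : IsOpen {t : ℝ | (x, t) ∈ U} := hU.preimage (by fun_prop)
  have hev : (fun t => f x t) =ᶠ[nhds y] fun t => G (x, t) := by
    filter_upwards [hopen.mem_nhds (by exact hp)] with t ht
    exact heq (x, t) ht
  have hd := (hasDerivAt_sliceY (hG.differentiableAt (hU.mem_nhds hp))).deriv
  show deriv (fun t => f x t) y = Dy G (x, y)
  rw [hev.deriv_eq, hd]

lemma contDiffOn_Dx {U : Set (ℝ × ℝ)} (hU : IsOpen U) {G : ℝ × ℝ → ℝ} {n m : WithTop ℕ∞}
    (hG : ContDiffOn ℝ n G U) (hmn : m + 1 ≤ n) : ContDiffOn ℝ m (Dx G) U :=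
  (hG.fderiv_of_isOpen hU hmn).clm_apply contDiffOn_const

lemma contDiffOn_Dy {U : Set (ℝ × ℝ)} (hU : IsOpen U) {G : ℝ × ℝ → ℝ} {n m : WithTop ℕ∞}
    (hG : ContDiffOn ℝ n G U) (hmn : m + 1 ≤ n) : ContDiffOn ℝ m (Dy G) U :=
  (hG.fderiv_of_isOpen hU hmn).clm_apply contDiffOn_const

lemma Dx_congr {U : Set (ℝ × ℝ)} (hU : IsOpen U) {G H : ℝ × ℝ → ℝ}
    (heq : ∀ q ∈ U, G q = H q) {p : ℝ × ℝ} (hp : p ∈ U) : Dx G p = Dx H p := by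
  have hev : G =ᶠ[nhds p] H := Filter.eventuallyEq_of_mem (hU.mem_nhds hp) heq
  show fderiv ℝ G p (1, 0) = fderiv ℝ H p (1, 0)
  rw [hev.fderiv_eq]

lemma sym_DxDy {U : Set (ℝ × ℝ)} (hU : IsOpen U) {G : ℝ × ℝ → ℝ}
    (hG : ContDiffOn ℝ 2 G U) {p : ℝ × ℝ} (hp : p ∈ U) : Dy (Dx G) p = Dx (Dy G) p := by
  have hmem := hU.mem_nhds hp
  have hsym : IsSymmSndFDerivAt ℝ G p :=
    (hG.contDiffAt hmem).isSymmSndFDerivAt (by simp)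
  have hdiff : DifferentiableAt ℝ (fderiv ℝ G) p :=
    ((hG.fderiv_of_isOpen hU (m := 1) (by norm_num)).differentiableOn one_ne_zero).differentiableAt
      hmem
  have key : ∀ v w : ℝ × ℝ,
      fderiv ℝ (fun q => fderiv ℝ G q v) p w = fderiv ℝ (fderiv ℝ G) p w v := by
    intro v w
    have hc : HasFDerivAt (fun q => fderiv ℝ G q v)
        ((ContinuousLinearMap.apply ℝ ℝ v).comp (fderiv ℝ (fderiv ℝ G) p)) p :=
      (ContinuousLinearMap.apply ℝ ℝ v).hasFDerivAt.comp p hdiff.hasFDerivAt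
    rw [hc.fderiv]; rfl
  show fderiv ℝ (fun q => fderiv ℝ G q (1,0)) p (0,1) = fderiv ℝ (fun q => fderiv ℝ G q (0,1)) p (1,0)
  rw [key, key]
  exact hsym (0,1) (1,0)

def RepOn (f : ℝ → ℝ → ℝ) (G : ℝ × ℝ → ℝ) (U : Set (ℝ × ℝ)) : Prop :=
  ∀ p ∈ U, f p.1 p.2 = G p

lemma RepOn.pdx {U : Set (ℝ × ℝ)} {f : ℝ → ℝ → ℝ} {G : ℝ × ℝ → ℝ}
    (h : RepOn f G U) (hU : IsOpen U) (hG : DifferentiableOn ℝ G U) :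
    RepOn (pdx f) (Dx G) U := fun p hp => by
  have := pdx_rep hU h hG (x := p.1) (y := p.2) (by simpa using hp)
  simpa using this

lemma RepOn.pdy {U : Set (ℝ × ℝ)} {f : ℝ → ℝ → ℝ} {G : ℝ × ℝ → ℝ}
    (h : RepOn f G U) (hU : IsOpen U) (hG : DifferentiableOn ℝ G U) :
    RepOn (pdy f) (Dy G) U := fun p hp => by
  have := pdy_rep hU h hG (x := p.1) (y := p.2) (by simpa using hp)
  simpa using this

lemma tietze {K : Set (ℝ × ℝ)} (hK : IsClosed K) {G : ℝ × ℝ → ℝ} (hG : ContinuousOn G K) :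
    ∃ V : ℝ × ℝ → ℝ, Continuous V ∧ ∀ q ∈ K, V q = G q := by
  obtain ⟨g, hg⟩ := ContinuousMap.exists_restrict_eq (Y := ℝ) hK
    ⟨K.restrict G, continuousOn_iff_continuous_restrict.mp hG⟩
  refine ⟨g, g.continuous, fun q hq => ?_⟩
  have := DFunLike.congr_fun hg (⟨q, hq⟩ : K)
  exact this

lemma abs_intervalIntegral_le {g : ℝ → ℝ} {a b c d : ℝ} (hab : a ≤ b)
    (hg : IntervalIntegrable g volume a b) (hc : c ∈ Set.Icc a b) (hd : d ∈ Set.Icc a b) :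
    |∫ t in c..d, g t| ≤ ∫ t in a..b, |g t| := by
  have h1 : |∫ t in c..d, g t| ≤ abs (∫ t in c..d, abs (g t)) := by
    simpa [Real.norm_eq_abs] using
      intervalIntegral.norm_integral_le_abs_integral_norm (f := g) (a := c) (b := d) (μ := volume)
  refine h1.trans ?_
  have h2 : abs (∫ t in c..d, abs (g t)) ≤ abs (∫ t in a..b, abs (g t)) := by
    apply intervalIntegral.abs_integral_mono_interval
    · exact Set.uIoc_subset_uIoc_of_uIcc_subset_uIcc
        (Set.uIcc_subset_uIcc (by rwa [Set.uIcc_of_le hab]) (by rwa [Set.uIcc_of_le hab]))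
    · exact Filter.Eventually.of_forall fun t => abs_nonneg _
    · simpa [Real.norm_eq_abs] using hg.norm
  refine h2.trans_eq (abs_of_nonneg ?_)
  exact intervalIntegral.integral_nonneg hab fun t _ => abs_nonneg _


lemma RepOn.app {U : Set (ℝ × ℝ)} {f : ℝ → ℝ → ℝ} {G : ℝ × ℝ → ℝ}
    (h : RepOn f G U) {x y : ℝ} (hxy : (x, y) ∈ U) : f x y = G (x, y) := h (x, y) hxy

set_option linter.unusedTactic false

variable {w : ℝ → ℝ → ℝ} {c0 c1 c2 c3 c4 c5 c6 c7 : ℝ}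

lemma pdx_w (hw : ∀ x y : ℝ, w x y = c0 + c1 * x + c2 * y + c3 * x ^ 2 + c4 * (x * y) + c5 * y ^ 2
      + c6 * x ^ 3 + c7 * y ^ 3) :
    ∀ x y : ℝ, pdx w x y = c1 + 2 * c3 * x + c4 * y + 3 * c6 * x ^ 2 := by
  intro x y
  have hfun : (fun t => w t y) = fun t =>
      c0 + c1 * t + c2 * y + c3 * t ^ 2 + c4 * (t * y) + c5 * y ^ 2 + c6 * t ^ 3 + c7 * y ^ 3 := by
    funext t; exact hw t y
  have hD : HasDerivAt (fun t : ℝ =>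
      c0 + c1 * t + c2 * y + c3 * t ^ 2 + c4 * (t * y) + c5 * y ^ 2 + c6 * t ^ 3 + c7 * y ^ 3)
      (c1 + 2 * c3 * x + c4 * y + 3 * c6 * x ^ 2) x := by
    have h1 : HasDerivAt (fun t : ℝ =>
        c0 + c1 * t + c2 * y + c3 * t ^ 2 + c4 * (t * y) + c5 * y ^ 2 + c6 * t ^ 3 + c7 * y ^ 3)
        (0 + c1 * 1 + 0 + c3 * (↑2 * x ^ 1) + c4 * (1 * y) + 0 + c6 * (↑3 * x ^ 2) + 0) x := by
      exact (((((((hasDerivAt_const x c0).add ((hasDerivAt_id x).const_mul c1)).add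
        (hasDerivAt_const x (c2 * y))).add ((hasDerivAt_pow 2 x).const_mul c3)).add
        (((hasDerivAt_id x).mul_const y).const_mul c4)).add
        (hasDerivAt_const x (c5 * y ^ 2))).add ((hasDerivAt_pow 3 x).const_mul c6)).add
        (hasDerivAt_const x (c7 * y ^ 3))
    convert h1 using 1
    push_cast; ring
  show deriv (fun t => w t y) x = _
  rw [hfun, hD.deriv]

lemma pdy_w (hw : ∀ x y : ℝ, w x y = c0 + c1 * x + c2 * y + c3 * x ^ 2 + c4 * (x * y) + c5 * y ^ 2
      + c6 * x ^ 3 + c7 * y ^ 3) :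
    ∀ x y : ℝ, pdy w x y = c2 + c4 * x + 2 * c5 * y + 3 * c7 * y ^ 2 := by
  intro x y
  have hfun : (fun t => w x t) = fun t =>
      c0 + c1 * x + c2 * t + c3 * x ^ 2 + c4 * (x * t) + c5 * t ^ 2 + c6 * x ^ 3 + c7 * t ^ 3 := by
    funext t; exact hw x t
  have hD : HasDerivAt (fun t : ℝ =>
      c0 + c1 * x + c2 * t + c3 * x ^ 2 + c4 * (x * t) + c5 * t ^ 2 + c6 * x ^ 3 + c7 * t ^ 3)
      (c2 + c4 * x + 2 * c5 * y + 3 * c7 * y ^ 2) y := by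
    have h1 : HasDerivAt (fun t : ℝ =>
        c0 + c1 * x + c2 * t + c3 * x ^ 2 + c4 * (x * t) + c5 * t ^ 2 + c6 * x ^ 3 + c7 * t ^ 3)
        (0 + 0 + c2 * 1 + 0 + c4 * (x * 1) + c5 * (↑2 * y ^ 1) + 0 + c7 * (↑3 * y ^ 2)) y := by
      exact (((((((hasDerivAt_const y c0).add (hasDerivAt_const y (c1 * x))).add
        ((hasDerivAt_id y).const_mul c2)).add (hasDerivAt_const y (c3 * x ^ 2))).add
        (((hasDerivAt_id y).const_mul x).const_mul c4)).add
        ((hasDerivAt_pow 2 y).const_mul c5)).add (hasDerivAt_const y (c6 * x ^ 3))).add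
        ((hasDerivAt_pow 3 y).const_mul c7)
    convert h1 using 1
    push_cast; ring
  show deriv (fun t => w x t) y = _
  rw [hfun, hD.deriv]

-- second derivatives, given first-derivative formulas
lemma deriv_linear (A B : ℝ) (x : ℝ) : deriv (fun t : ℝ => A + B * t) x = B := by
  have : HasDerivAt (fun t : ℝ => A + B * t) (0 + B * 1) x :=
    (hasDerivAt_const x A).add ((hasDerivAt_id x).const_mul B)
  simpa using this.deriv

lemma deriv_quad (A B C : ℝ) (x : ℝ) : deriv (fun t : ℝ => A + B * t + C * t ^ 2) x
    = B + 2 * C * x := by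
  have h : HasDerivAt (fun t : ℝ => A + B * t + C * t ^ 2) (0 + B * 1 + C * (↑2 * x ^ 1)) x :=
    ((hasDerivAt_const x A).add ((hasDerivAt_id x).const_mul B)).add
      ((hasDerivAt_pow 2 x).const_mul C)
  rw [h.deriv]; push_cast; ring

end Stmt6Aux

open Stmt6Aux

set_option maxHeartbeats 1000000 in
/-- Superconvergence of the normal-normal boundary term on a pair of opposite vertical
edges of one element. -/
theorem stmt_6 :
    ∃ C > (0:ℝ), ∀ h : ℝ, 0 < h → ∀ x1c x2c : ℝ, ∀ u w : ℝ → ℝ → ℝ,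
      C4Near u (x1c - h) (x1c + h) (x2c - h) (x2c + h) → MorleyShape2 w →
      |∫ y in (x2c - h)..(x2c + h),
          pdx (pdx u) (x1c + h) y
              * (pdx w (x1c + h) y
                - (1 / (2 * h)) * (∫ t in (x2c - h)..(x2c + h), pdx w (x1c + h) t))
            - pdx (pdx u) (x1c - h) y
              * (pdx w (x1c - h) y
                - (1 / (2 * h)) * (∫ t in (x2c - h)..(x2c + h), pdx w (x1c - h) t))|
        ≤ C * h ^ 2 * semiH4R u (x1c - h) (x1c + h) (x2c - h) (x2c + h) * semiH2R w (x1c - h) (x1c + h) (x2c - h) (x2c + h) := by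
  refine ⟨1, one_pos, ?_⟩
  intro h hp x1c x2c u w hC4 hMS
  obtain ⟨U, hUo, hKU, hF⟩ := hC4
  obtain ⟨c0, c1, c2, c3, c4, c5, c6, c7, hw⟩ := hMS
  set l : ℝ := x1c - h with hl
  set r : ℝ := x1c + h with hr
  set a : ℝ := x2c - h with ha
  set b : ℝ := x2c + h with hb
  set F : ℝ × ℝ → ℝ := fun p : ℝ × ℝ => u p.1 p.2 with hFdef
  have hab : a ≤ b := by rw [ha, hb]; linarith
  have hlr : l ≤ r := by rw [hl, hr]; linarith
  have hba : b - a = 2 * h := by rw [ha, hb]; ring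
  have hrl : r - l = 2 * h := by rw [hl, hr]; ring
  have hx2 : x2c ∈ Set.Icc a b := by constructor <;> [rw [ha]; rw [hb]] <;> linarith
  have hrIcc : r ∈ Set.Icc l r := Set.right_mem_Icc.mpr hlr
  have hlIcc : l ∈ Set.Icc l r := Set.left_mem_Icc.mpr hlr
  have hKcl : IsClosed (Set.Icc l r ×ˢ Set.Icc a b) := isClosed_Icc.prod isClosed_Icc
  have hmemU : ∀ {x y : ℝ}, x ∈ Set.Icc l r → y ∈ Set.Icc a b → (x, y) ∈ U :=
    fun hx hy => hKU (Set.mk_mem_prod hx hy)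
  -- smoothness ladder
  have hF1 : ContDiffOn ℝ 3 (Dx F) U := contDiffOn_Dx hUo hF (by norm_num)
  have hF2 : ContDiffOn ℝ 2 (Dx (Dx F)) U := contDiffOn_Dx hUo hF1 (by norm_num)
  have hF3 : ContDiffOn ℝ 1 (Dx (Dx (Dx F))) U := contDiffOn_Dx hUo hF2 (by norm_num)
  have hF3y : ContDiffOn ℝ 0 (Dy (Dx (Dx (Dx F)))) U := contDiffOn_Dy hUo hF3 (by norm_num)
  have hG1 : ContDiffOn ℝ 3 (Dy F) U := contDiffOn_Dy hUo hF (by norm_num)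
  have hG2 : ContDiffOn ℝ 2 (Dx (Dy F)) U := contDiffOn_Dx hUo hG1 (by norm_num)
  have hG3 : ContDiffOn ℝ 1 (Dx (Dx (Dy F))) U := contDiffOn_Dx hUo hG2 (by norm_num)
  have hG4 : ContDiffOn ℝ 0 (Dx (Dx (Dx (Dy F)))) U := contDiffOn_Dx hUo hG3 (by norm_num)
  have hQ2 : ContDiffOn ℝ 2 (Dy (Dy F)) U := contDiffOn_Dy hUo hG1 (by norm_num)
  have hQ3 : ContDiffOn ℝ 1 (Dx (Dy (Dy F))) U := contDiffOn_Dx hUo hQ2 (by norm_num)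
  have hQ4 : ContDiffOn ℝ 0 (Dx (Dx (Dy (Dy F)))) U := contDiffOn_Dx hUo hQ3 (by norm_num)
  have hR3 : ContDiffOn ℝ 1 (Dy (Dy (Dy F))) U := contDiffOn_Dy hUo hQ2 (by norm_num)
  have hR4 : ContDiffOn ℝ 0 (Dx (Dy (Dy (Dy F)))) U := contDiffOn_Dx hUo hR3 (by norm_num)
  have hS4c : ContDiffOn ℝ 0 (Dy (Dy (Dy (Dy F)))) U := contDiffOn_Dy hUo hR3 (by norm_num)
  have hT1c : ContDiffOn ℝ 0 (Dx (Dx (Dx (Dx F)))) U := contDiffOn_Dx hUo hF3 (by norm_num)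
  -- representations of the curried partial derivatives
  have hRu : RepOn u F U := fun p _ => rfl
  have hRx1 : RepOn (pdx u) (Dx F) U := hRu.pdx hUo (hF.differentiableOn (by norm_num))
  have hRx2 : RepOn (pdx (pdx u)) (Dx (Dx F)) U :=
    hRx1.pdx hUo (hF1.differentiableOn (by norm_num))
  have hRx3 : RepOn (pdx (pdx (pdx u))) (Dx (Dx (Dx F))) U :=
    hRx2.pdx hUo (hF2.differentiableOn (by norm_num))
  have hT1 : RepOn (pdx (pdx (pdx (pdx u)))) (Dx (Dx (Dx (Dx F)))) U :=
    hRx3.pdx hUo (hF3.differentiableOn (by norm_num))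
  have hRy1 : RepOn (pdy u) (Dy F) U := hRu.pdy hUo (hF.differentiableOn (by norm_num))
  have hRy1x : RepOn (pdx (pdy u)) (Dx (Dy F)) U :=
    hRy1.pdx hUo (hG1.differentiableOn (by norm_num))
  have hRy1xx : RepOn (pdx (pdx (pdy u))) (Dx (Dx (Dy F))) U :=
    hRy1x.pdx hUo (hG2.differentiableOn (by norm_num))
  have hT2 : RepOn (pdx (pdx (pdx (pdy u)))) (Dx (Dx (Dx (Dy F)))) U :=
    hRy1xx.pdx hUo (hG3.differentiableOn (by norm_num))
  have hRyy : RepOn (pdy (pdy u)) (Dy (Dy F)) U :=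
    hRy1.pdy hUo (hG1.differentiableOn (by norm_num))
  have hRyyx : RepOn (pdx (pdy (pdy u))) (Dx (Dy (Dy F))) U :=
    hRyy.pdx hUo (hQ2.differentiableOn (by norm_num))
  have hT3 : RepOn (pdx (pdx (pdy (pdy u)))) (Dx (Dx (Dy (Dy F)))) U :=
    hRyyx.pdx hUo (hQ3.differentiableOn (by norm_num))
  have hRy3 : RepOn (pdy (pdy (pdy u))) (Dy (Dy (Dy F))) U :=
    hRyy.pdy hUo (hQ2.differentiableOn (by norm_num))
  have hT4 : RepOn (pdx (pdy (pdy (pdy u)))) (Dx (Dy (Dy (Dy F)))) U :=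
    hRy3.pdx hUo (hR3.differentiableOn (by norm_num))
  have hT5 : RepOn (pdy (pdy (pdy (pdy u)))) (Dy (Dy (Dy (Dy F)))) U :=
    hRy3.pdy hUo (hR3.differentiableOn (by norm_num))
  -- symmetry of mixed derivatives
  have hs1 : ∀ p ∈ U, Dy (Dx F) p = Dx (Dy F) p :=
    fun p hp => sym_DxDy hUo (hF.of_le (by norm_num)) hp
  have hs2 : ∀ p ∈ U, Dy (Dx (Dx F)) p = Dx (Dx (Dy F)) p := fun p hp =>
    (sym_DxDy hUo (hF1.of_le (by norm_num)) hp).trans (Dx_congr hUo hs1 hp)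
  have hs3 : ∀ p ∈ U, Dy (Dx (Dx (Dx F))) p = Dx (Dx (Dx (Dy F))) p := fun p hp =>
    (sym_DxDy hUo hF2 hp).trans (Dx_congr hUo hs2 hp)
  -- Tietze extensions
  obtain ⟨V, hVc, hVK⟩ := tietze hKcl ((hF3y.continuousOn).mono hKU)
  obtain ⟨V1, hV1c, hV1K⟩ := tietze hKcl ((hT1c.continuousOn).mono hKU)
  obtain ⟨V3, hV3c, hV3K⟩ := tietze hKcl ((hQ4.continuousOn).mono hKU)
  obtain ⟨V4, hV4c, hV4K⟩ := tietze hKcl ((hR4.continuousOn).mono hKU)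
  obtain ⟨V5, hV5c, hV5K⟩ := tietze hKcl ((hS4c.continuousOn).mono hKU)
  have hVT2 : ∀ q ∈ Set.Icc l r ×ˢ Set.Icc a b, V q = Dx (Dx (Dx (Dy F))) q :=
    fun q hq => (hVK q hq).trans (hs3 q (hKU hq))
  -- the polynomial w
  have hpdxw := pdx_w hw
  have hpdyw := pdy_w hw
  have hxx : ∀ x y : ℝ, pdx (pdx w) x y = 2 * c3 + 6 * c6 * x := by
    intro x y
    have hfun : (fun t => pdx w t y) = fun t => (c1 + c4 * y) + (2 * c3) * t + (3 * c6) * t ^ 2 := by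
      funext t; rw [hpdxw]; try ring
    show deriv (fun t => pdx w t y) x = _
    rw [hfun, deriv_quad]; try ring
  have hxy : ∀ x y : ℝ, pdx (pdy w) x y = c4 := by
    intro x y
    have hfun : (fun t => pdy w t y) = fun t => (c2 + 2 * c5 * y + 3 * c7 * y ^ 2) + c4 * t := by
      funext t; rw [hpdyw]; try ring
    show deriv (fun t => pdy w t y) x = _
    rw [hfun, deriv_linear]
  have hyx : ∀ x y : ℝ, pdy (pdx w) x y = c4 := by
    intro x y
    have hfun : (fun t => pdx w x t) = fun t => (c1 + 2 * c3 * x + 3 * c6 * x ^ 2) + c4 * t := by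
      funext t; rw [hpdxw]; try ring
    show deriv (fun t => pdx w x t) y = _
    rw [hfun, deriv_linear]
  have hyy : ∀ x y : ℝ, pdy (pdy w) x y = 2 * c5 + 6 * c7 * y := by
    intro x y
    have hfun : (fun t => pdy w x t) = fun t => (c2 + c4 * x) + (2 * c5) * t + (3 * c7) * t ^ 2 := by
      funext t; rw [hpdyw]; try ring
    show deriv (fun t => pdy w x t) y = _
    rw [hfun, deriv_quad]; try ring
  have hEdge : ∀ X y : ℝ, pdx w X y - 1 / (2 * h) * ∫ t in a..b, pdx w X t
      = c4 * (y - x2c) := by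
    intro X y
    have hfun : (fun t => pdx w X t) = fun t =>
        (c1 + 2 * c3 * X + 3 * c6 * X ^ 2) + c4 * t := by
      funext t; rw [hpdxw]; try ring
    have hint : (∫ t in a..b, pdx w X t)
        = (c1 + 2 * c3 * X + 3 * c6 * X ^ 2) * (b - a) + c4 * ((b ^ 2 - a ^ 2) / 2) := by
      rw [hfun, intervalIntegral.integral_add (intervalIntegrable_const)
        ((by fun_prop : Continuous fun t : ℝ => c4 * t).intervalIntegrable _ _),
        intervalIntegral.integral_const, intervalIntegral.integral_const_mul, integral_id,
        smul_eq_mul]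
      ring
    rw [hpdxw, hint, ha, hb]
    have h2 : (2 : ℝ) * h ≠ 0 := by positivity
    field_simp
    ring
  -- rewrite the main integral
  have hI1 : (∫ y in a..b,
        pdx (pdx u) r y * (pdx w r y - 1 / (2 * h) * ∫ t in a..b, pdx w r t)
          - pdx (pdx u) l y * (pdx w l y - 1 / (2 * h) * ∫ t in a..b, pdx w l t))
      = ∫ y in a..b, (Dx (Dx F) (r, y) - Dx (Dx F) (l, y)) * (c4 * (y - x2c)) := by
    apply intervalIntegral.integral_congr
    intro y hy
    rw [Set.uIcc_of_le hab] at hy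
    beta_reduce
    rw [hRx2.app (hmemU hrIcc hy), hRx2.app (hmemU hlIcc hy), hEdge r y, hEdge l y]
    ring
  set D0 : ℝ := Dx (Dx F) (r, x2c) - Dx (Dx F) (l, x2c) with hD0
  -- continuity facts
  have hcF2 : ContinuousOn (Dx (Dx F)) U := hF2.continuousOn
  have hcF3 : ContinuousOn (Dx (Dx (Dx F))) U := hF3.continuousOn
  have hsliceCont : ∀ y' ∈ Set.Icc a b,
      ContinuousOn (fun s => Dx (Dx (Dx F)) (s, y')) (Set.Icc l r) := by
    intro y' hy'
    exact hcF3.comp (Continuous.continuousOn (by fun_prop)) (fun s hs => hmemU hs hy')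
  -- FTC in the x-direction
  have hA : ∀ y' ∈ Set.Icc a b, Dx (Dx F) (r, y') - Dx (Dx F) (l, y')
      = ∫ s in l..r, Dx (Dx (Dx F)) (s, y') := by
    intro y' hy'
    have hftc := intervalIntegral.integral_eq_sub_of_hasDerivAt
      (f := fun s => Dx (Dx F) (s, y')) (f' := fun s => Dx (Dx (Dx F)) (s, y'))
      (fun s hs => by
        rw [Set.uIcc_of_le hlr] at hs
        exact hasDerivAt_sliceX
          ((hF2.differentiableOn (by norm_num)).differentiableAt
            (hUo.mem_nhds (hmemU hs hy'))))
      (((hsliceCont y' hy').mono (by rw [Set.uIcc_of_le hlr])).intervalIntegrable)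
    rw [hftc]
  -- FTC in the y-direction
  have hB : ∀ y ∈ Set.Icc a b, ∀ s ∈ Set.Icc l r,
      Dx (Dx (Dx F)) (s, y) - Dx (Dx (Dx F)) (s, x2c) = ∫ t in x2c..y, V (s, t) := by
    intro y hy s hs
    have hsub : Set.uIcc x2c y ⊆ Set.Icc a b := by
      rw [← Set.uIcc_of_le hab]
      exact Set.uIcc_subset_uIcc (by rwa [Set.uIcc_of_le hab]) (by rwa [Set.uIcc_of_le hab])
    have hftc := intervalIntegral.integral_eq_sub_of_hasDerivAt
      (f := fun t => Dx (Dx (Dx F)) (s, t)) (f' := fun t => Dy (Dx (Dx (Dx F))) (s, t))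
      (fun t ht => hasDerivAt_sliceY
        ((hF3.differentiableOn (by norm_num)).differentiableAt
          (hUo.mem_nhds (hmemU hs (hsub ht)))))
      ((((hF3y.continuousOn).comp (Continuous.continuousOn (by fun_prop))
        (fun t ht => hmemU hs (hsub ht))).intervalIntegrable))
    rw [← hftc]
    apply intervalIntegral.integral_congr
    intro t ht
    exact (hVK (s, t) (Set.mk_mem_prod hs (hsub ht))).symm
  have hkey : ∀ y ∈ Set.Ioc a b, Dx (Dx F) (r, y) - Dx (Dx F) (l, y) - D0
      = ∫ s in l..r, (∫ t in x2c..y, V (s, t)) := by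
    intro y hy
    have hyI : y ∈ Set.Icc a b := Set.Ioc_subset_Icc_self hy
    rw [hD0, hA y hyI, hA x2c hx2,
      ← intervalIntegral.integral_sub
        (((hsliceCont y hyI).mono (by rw [Set.uIcc_of_le hlr])).intervalIntegrable)
        (((hsliceCont x2c hx2).mono (by rw [Set.uIcc_of_le hlr])).intervalIntegrable)]
    apply intervalIntegral.integral_congr
    intro s hs
    rw [Set.uIcc_of_le hlr] at hs
    exact hB y hyI s hs
  -- the L¹-type bound
  set J : ℝ := ∫ s in l..r, (∫ t in a..b, |V (s, t)|) with hJ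
  have hηc : Continuous fun s => ∫ t in a..b, |V (s, t)| := by
    apply intervalIntegral.continuous_parametric_intervalIntegral_of_continuous'
    fun_prop
  have hρc : Continuous fun s => ∫ t in a..b, (V (s, t)) ^ 2 := by
    apply intervalIntegral.continuous_parametric_intervalIntegral_of_continuous'
    fun_prop
  have hJ0 : 0 ≤ J := intervalIntegral.integral_nonneg hlr
    (fun s _ => intervalIntegral.integral_nonneg hab (fun t _ => abs_nonneg _))
  set M : ℝ := ∫ s in l..r, (∫ t in a..b, (V (s, t)) ^ 2) with hM
  have hM0 : 0 ≤ M := intervalIntegral.integral_nonneg hlr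
    (fun s _ => intervalIntegral.integral_nonneg hab (fun t _ => sq_nonneg _))
  have hbd : ∀ y ∈ Set.uIoc a b,
      ‖(Dx (Dx F) (r, y) - Dx (Dx F) (l, y) - D0) * (c4 * (y - x2c))‖ ≤ J * (|c4| * h) := by
    intro y hy
    rw [Set.uIoc_of_le hab] at hy
    rw [Real.norm_eq_abs, abs_mul]
    have h1 : |Dx (Dx F) (r, y) - Dx (Dx F) (l, y) - D0| ≤ J := by
      rw [hkey y hy]
      have hle := intervalIntegral.norm_integral_le_abs_of_norm_le
        (μ := volume) (a := l) (b := r)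
        (f := fun s => ∫ t in x2c..y, V (s, t)) (g := fun s => ∫ t in a..b, |V (s, t)|)
        (Filter.Eventually.of_forall (fun s => by
          rw [Real.norm_eq_abs]
          exact abs_intervalIntegral_le hab
            ((hVc.comp (by fun_prop : Continuous fun t : ℝ => (s, t))).intervalIntegrable _ _)
            hx2 (Set.Ioc_subset_Icc_self hy)))
        (hηc.intervalIntegrable _ _)
      rw [Real.norm_eq_abs] at hle
      refine hle.trans ?_
      rw [← hJ, abs_of_nonneg hJ0]
    have h2 : |c4 * (y - x2c)| ≤ |c4| * h := by
      rw [abs_mul]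
      refine mul_le_mul_of_nonneg_left ?_ (abs_nonneg c4)
      rw [abs_le]
      constructor
      · have := hy.1; rw [ha] at this; linarith
      · have := hy.2; rw [hb] at this; linarith
    exact mul_le_mul h1 h2 (abs_nonneg _) hJ0
  have hI2 : (∫ y in a..b, (Dx (Dx F) (r, y) - Dx (Dx F) (l, y)) * (c4 * (y - x2c)))
      = ∫ y in a..b, (Dx (Dx F) (r, y) - Dx (Dx F) (l, y) - D0) * (c4 * (y - x2c)) := by
    have hzero : (∫ y in a..b, (y - x2c)) = 0 := by
      rw [intervalIntegral.integral_sub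
        ((by fun_prop : Continuous fun y : ℝ => y).intervalIntegrable _ _)
        intervalIntegrable_const, integral_id, intervalIntegral.integral_const, smul_eq_mul,
        ha, hb]
      ring
    have hN2int : IntervalIntegrable
        (fun y => (Dx (Dx F) (r, y) - Dx (Dx F) (l, y) - D0) * (c4 * (y - x2c)))
        volume a b := by
      apply ContinuousOn.intervalIntegrable
      rw [Set.uIcc_of_le hab]
      have hcr : ContinuousOn (fun y => Dx (Dx F) (r, y)) (Set.Icc a b) :=
        hcF2.comp (Continuous.continuousOn (by fun_prop)) (fun y hy => hmemU hrIcc hy)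
      have hcl : ContinuousOn (fun y => Dx (Dx F) (l, y)) (Set.Icc a b) :=
        hcF2.comp (Continuous.continuousOn (by fun_prop)) (fun y hy => hmemU hlIcc hy)
      exact ((hcr.sub hcl).sub continuousOn_const).mul (Continuous.continuousOn (by fun_prop))
    have hlinint : IntervalIntegrable (fun y => D0 * (c4 * (y - x2c))) volume a b :=
      (by fun_prop : Continuous fun y : ℝ => D0 * (c4 * (y - x2c))).intervalIntegrable _ _
    have hsplit : (∫ y in a..b, (Dx (Dx F) (r, y) - Dx (Dx F) (l, y)) * (c4 * (y - x2c)))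
        = (∫ y in a..b, (Dx (Dx F) (r, y) - Dx (Dx F) (l, y) - D0) * (c4 * (y - x2c)))
          + ∫ y in a..b, D0 * (c4 * (y - x2c)) := by
      rw [← intervalIntegral.integral_add hN2int hlinint]
      apply intervalIntegral.integral_congr
      intro y _
      beta_reduce
      ring
    have hlin0 : (∫ y in a..b, D0 * (c4 * (y - x2c))) = 0 := by
      have : (fun y => D0 * (c4 * (y - x2c))) = fun y => (D0 * c4) * (y - x2c) := by
        funext y; ring
      rw [this, intervalIntegral.integral_const_mul, hzero, mul_zero]
    rw [hsplit, hlin0, add_zero]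
  have hIbound : |∫ y in a..b,
        pdx (pdx u) r y * (pdx w r y - 1 / (2 * h) * ∫ t in a..b, pdx w r t)
          - pdx (pdx u) l y * (pdx w l y - 1 / (2 * h) * ∫ t in a..b, pdx w l t)|
      ≤ J * (|c4| * h) * (2 * h) := by
    rw [hI1, hI2]
    have := intervalIntegral.norm_integral_le_of_norm_le_const hbd
    rw [Real.norm_eq_abs] at this
    refine this.trans ?_
    rw [hba]
    rw [abs_of_nonneg (by positivity : (0:ℝ) ≤ 2 * h)]
  -- Cauchy–Schwarz-type bound for J
  have hJle' : ∀ δ : ℝ, 0 < δ → J ≤ 2 * h * Real.sqrt M + h * δ := by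
    intro δ hδ
    set ε : ℝ := (Real.sqrt M + δ) / (2 * h) with hε
    have hε0 : 0 < ε := by
      rw [hε]
      have := Real.sqrt_nonneg M
      positivity
    have hpt : ∀ s t : ℝ, |V (s, t)| ≤ (V (s, t)) ^ 2 / (2 * ε) + ε / 2 := by
      intro s t
      have h2 : 2 * ε * |V (s, t)| ≤ (V (s, t)) ^ 2 + ε ^ 2 := by
        nlinarith [sq_nonneg (|V (s, t)| - ε), sq_abs (V (s, t))]
      rw [div_add_div _ _ (by positivity) (by norm_num : (2:ℝ) ≠ 0),
        le_div_iff₀ (by positivity)]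
      nlinarith [h2]
    have hη_le : ∀ s : ℝ, (∫ t in a..b, |V (s, t)|)
        ≤ (∫ t in a..b, (V (s, t)) ^ 2) / (2 * ε) + ε * h := by
      intro s
      have hmono := intervalIntegral.integral_mono_on (μ := volume) hab
        (((hVc.comp (by fun_prop : Continuous fun t : ℝ => (s, t))).abs).intervalIntegrable _ _)
        ((by fun_prop : Continuous fun t : ℝ =>
          (V (s, t)) ^ 2 / (2 * ε) + ε / 2).intervalIntegrable _ _)
        (fun t _ => hpt s t)
      rw [intervalIntegral.integral_add
        ((by fun_prop : Continuous fun t : ℝ =>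
          (V (s, t)) ^ 2 / (2 * ε)).intervalIntegrable _ _) intervalIntegrable_const,
        intervalIntegral.integral_div, intervalIntegral.integral_const] at hmono
      rw [smul_eq_mul, hba] at hmono
      calc (∫ t in a..b, |V (s, t)|)
          ≤ (∫ t in a..b, (V (s, t)) ^ 2) / (2 * ε) + 2 * h * (ε / 2) := hmono
        _ = (∫ t in a..b, (V (s, t)) ^ 2) / (2 * ε) + ε * h := by ring
    have hJ_le2 : J ≤ M / (2 * ε) + 2 * ε * h ^ 2 := by
      have hmono := intervalIntegral.integral_mono_on (μ := volume) hlr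
        (hηc.intervalIntegrable _ _)
        (((hρc.div_const _).add continuous_const).intervalIntegrable _ _)
        (fun s _ => hη_le s)
      simp only [Pi.add_apply] at hmono
      rw [intervalIntegral.integral_add
        ((hρc.div_const _).intervalIntegrable _ _) intervalIntegrable_const,
        intervalIntegral.integral_div, intervalIntegral.integral_const] at hmono
      rw [smul_eq_mul, hrl] at hmono
      calc J ≤ M / (2 * ε) + 2 * h * (ε * h) := hmono
        _ = M / (2 * ε) + 2 * ε * h ^ 2 := by ring
    have hsq : Real.sqrt M * Real.sqrt M = M := Real.mul_self_sqrt hM0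
    have hMdiv : M / (2 * ε) ≤ h * Real.sqrt M := by
      have hsn := Real.sqrt_nonneg M
      have heq : h * Real.sqrt M * (2 * ε) = Real.sqrt M * (Real.sqrt M + δ) := by
        rw [hε]; field_simp
      rw [div_le_iff₀ (by positivity), heq]
      nlinarith [hsq, mul_nonneg hsn hδ.le]
    have hεh : 2 * ε * h ^ 2 = h * (Real.sqrt M + δ) := by
      rw [hε]; field_simp
    calc J ≤ M / (2 * ε) + 2 * ε * h ^ 2 := hJ_le2
      _ ≤ h * Real.sqrt M + h * (Real.sqrt M + δ) := by rw [hεh]; linarith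
      _ = 2 * h * Real.sqrt M + h * δ := by ring
  have hJle : J ≤ 2 * h * Real.sqrt M := by
    by_contra hcon
    push_neg at hcon
    have hδ : 0 < (J - 2 * h * Real.sqrt M) / (2 * h) :=
      div_pos (by linarith) (by positivity)
    have := hJle' _ hδ
    have h2 : h * ((J - 2 * h * Real.sqrt M) / (2 * h)) = (J - 2 * h * Real.sqrt M) / 2 := by
      field_simp
    rw [h2] at this
    linarith
  -- seminorm bounds
  have hH2 : semiH2R w l r a b = Real.sqrt (∫ x in l..r, ∫ y in a..b,
      ((2 * c3 + 6 * c6 * x) ^ 2 + c4 ^ 2 + c4 ^ 2 + (2 * c5 + 6 * c7 * y) ^ 2)) := by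
    unfold semiH2R
    congr 1
    simp only [hxx, hxy, hyx, hyy]
  have hS2ge : 8 * c4 ^ 2 * h ^ 2 ≤ ∫ x in l..r, ∫ y in a..b,
      ((2 * c3 + 6 * c6 * x) ^ 2 + c4 ^ 2 + c4 ^ 2 + (2 * c5 + 6 * c7 * y) ^ 2) := by
    have hinner : ∀ x : ℝ, 2 * c4 ^ 2 * (2 * h) ≤ ∫ y in a..b,
        ((2 * c3 + 6 * c6 * x) ^ 2 + c4 ^ 2 + c4 ^ 2 + (2 * c5 + 6 * c7 * y) ^ 2) := by
      intro x
      have hmono := intervalIntegral.integral_mono_on (μ := volume) hab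
        (intervalIntegrable_const (c := 2 * c4 ^ 2))
        ((by fun_prop : Continuous fun y : ℝ =>
          (2 * c3 + 6 * c6 * x) ^ 2 + c4 ^ 2 + c4 ^ 2 + (2 * c5 + 6 * c7 * y) ^ 2).intervalIntegrable _ _)
        (fun y _ => by
          beta_reduce
          nlinarith [sq_nonneg (2 * c3 + 6 * c6 * x), sq_nonneg (2 * c5 + 6 * c7 * y)])
      rw [intervalIntegral.integral_const, smul_eq_mul, hba] at hmono
      calc 2 * c4 ^ 2 * (2 * h) = 2 * h * (2 * c4 ^ 2) := by ring
        _ ≤ _ := hmono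
    have hmono := intervalIntegral.integral_mono_on (μ := volume) hlr
      (intervalIntegrable_const (c := 2 * c4 ^ 2 * (2 * h)))
      ((intervalIntegral.continuous_parametric_intervalIntegral_of_continuous'
        (μ := volume) (f := fun x y =>
          ((2 * c3 + 6 * c6 * x) ^ 2 + c4 ^ 2 + c4 ^ 2 + (2 * c5 + 6 * c7 * y) ^ 2))
        (by fun_prop) a b).intervalIntegrable _ _)
      (fun x _ => hinner x)
    rw [intervalIntegral.integral_const, smul_eq_mul, hrl] at hmono
    calc 8 * c4 ^ 2 * h ^ 2 = 2 * h * (2 * c4 ^ 2 * (2 * h)) := by ring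
      _ ≤ _ := hmono
  have hc4le : 2 * Real.sqrt 2 * (|c4| * h) ≤ semiH2R w l r a b := by
    rw [hH2]
    rw [Real.le_sqrt (by positivity) (le_trans (by positivity) hS2ge)]
    have hs2 : Real.sqrt 2 ^ 2 = 2 := Real.sq_sqrt (by norm_num)
    calc (2 * Real.sqrt 2 * (|c4| * h)) ^ 2 = 4 * (Real.sqrt 2 ^ 2) * (|c4| ^ 2 * h ^ 2) := by
          ring
      _ = 8 * c4 ^ 2 * h ^ 2 := by rw [hs2, sq_abs]; ring
      _ ≤ _ := hS2ge
  have hH4 : semiH4R u l r a b = Real.sqrt (∫ x in l..r, ∫ y in a..b,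
      ((V1 (x, y)) ^ 2 + 4 * (V (x, y)) ^ 2 + 6 * (V3 (x, y)) ^ 2 + 4 * (V4 (x, y)) ^ 2
        + (V5 (x, y)) ^ 2)) := by
    unfold semiH4R
    congr 1
    apply intervalIntegral.integral_congr
    intro x hx
    rw [Set.uIcc_of_le hlr] at hx
    apply intervalIntegral.integral_congr
    intro y hy
    rw [Set.uIcc_of_le hab] at hy
    beta_reduce
    have hqU : (x, y) ∈ U := hmemU hx hy
    have hqK : (x, y) ∈ Set.Icc l r ×ˢ Set.Icc a b := Set.mk_mem_prod hx hy
    rw [hT1.app hqU, hT2.app hqU, hT3.app hqU, hT4.app hqU, hT5.app hqU,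
      ← hV1K (x, y) hqK, ← hVT2 (x, y) hqK, ← hV3K (x, y) hqK, ← hV4K (x, y) hqK,
      ← hV5K (x, y) hqK]
  have h4M : 4 * M ≤ ∫ x in l..r, ∫ y in a..b,
      ((V1 (x, y)) ^ 2 + 4 * (V (x, y)) ^ 2 + 6 * (V3 (x, y)) ^ 2 + 4 * (V4 (x, y)) ^ 2
        + (V5 (x, y)) ^ 2) := by
    have hinner : ∀ x : ℝ, (∫ y in a..b, 4 * (V (x, y)) ^ 2) ≤ ∫ y in a..b,
        ((V1 (x, y)) ^ 2 + 4 * (V (x, y)) ^ 2 + 6 * (V3 (x, y)) ^ 2 + 4 * (V4 (x, y)) ^ 2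
          + (V5 (x, y)) ^ 2) := by
      intro x
      apply intervalIntegral.integral_mono_on (μ := volume) hab
        ((by fun_prop : Continuous fun y : ℝ => 4 * (V (x, y)) ^ 2).intervalIntegrable _ _)
        ((by fun_prop : Continuous fun y : ℝ =>
          (V1 (x, y)) ^ 2 + 4 * (V (x, y)) ^ 2 + 6 * (V3 (x, y)) ^ 2 + 4 * (V4 (x, y)) ^ 2
            + (V5 (x, y)) ^ 2).intervalIntegrable _ _)
      intro y _
      beta_reduce
      nlinarith [sq_nonneg (V1 (x, y)), sq_nonneg (V3 (x, y)), sq_nonneg (V4 (x, y)),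
        sq_nonneg (V5 (x, y)), sq_nonneg (V (x, y))]
    have hmono := intervalIntegral.integral_mono_on (μ := volume) hlr
      ((intervalIntegral.continuous_parametric_intervalIntegral_of_continuous'
        (μ := volume) (f := fun x y => 4 * (V (x, y)) ^ 2) (by fun_prop) a b).intervalIntegrable _ _)
      ((intervalIntegral.continuous_parametric_intervalIntegral_of_continuous'
        (μ := volume) (f := fun x y =>
          ((V1 (x, y)) ^ 2 + 4 * (V (x, y)) ^ 2 + 6 * (V3 (x, y)) ^ 2 + 4 * (V4 (x, y)) ^ 2
            + (V5 (x, y)) ^ 2)) (by fun_prop) a b).intervalIntegrable _ _)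
      (fun x _ => hinner x)
    have h4 : (∫ x in l..r, ∫ y in a..b, 4 * (V (x, y)) ^ 2) = 4 * M := by
      rw [hM]
      simp only [intervalIntegral.integral_const_mul]
    rw [h4] at hmono
    exact hmono
  have hsqrtM_le : 2 * Real.sqrt M ≤ semiH4R u l r a b := by
    rw [hH4]
    rw [Real.le_sqrt (by positivity) (le_trans (by positivity) h4M)]
    calc (2 * Real.sqrt M) ^ 2 = 4 * (Real.sqrt M ^ 2) := by ring
      _ = 4 * M := by rw [Real.sq_sqrt hM0]
      _ ≤ _ := h4M
  -- final assembly
  have hA0 : 0 ≤ semiH4R u l r a b := Real.sqrt_nonneg _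
  have hB0 : 0 ≤ semiH2R w l r a b := Real.sqrt_nonneg _
  have hs2ge1 : (1 : ℝ) ≤ Real.sqrt 2 := by
    rw [show (1 : ℝ) = Real.sqrt 1 by simp]
    exact Real.sqrt_le_sqrt (by norm_num)
  have hAB : 4 * (Real.sqrt M * (|c4| * h)) ≤ semiH4R u l r a b * semiH2R w l r a b := by
    have h1 := mul_le_mul hsqrtM_le hc4le (by positivity) hA0
    nlinarith [Real.sqrt_nonneg M, abs_nonneg c4, hp.le, hs2ge1,
      mul_nonneg (Real.sqrt_nonneg M) (mul_nonneg (abs_nonneg c4) hp.le)]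
  calc |∫ y in a..b,
        pdx (pdx u) r y * (pdx w r y - 1 / (2 * h) * ∫ t in a..b, pdx w r t)
          - pdx (pdx u) l y * (pdx w l y - 1 / (2 * h) * ∫ t in a..b, pdx w l t)|
      ≤ J * (|c4| * h) * (2 * h) := hIbound
    _ ≤ (2 * h * Real.sqrt M) * (|c4| * h) * (2 * h) := by
        have := mul_le_mul_of_nonneg_right
          (mul_le_mul_of_nonneg_right hJle (by positivity : (0:ℝ) ≤ |c4| * h))
          (by positivity : (0:ℝ) ≤ 2 * h)
        exact this
    _ = h ^ 2 * (4 * (Real.sqrt M * (|c4| * h))) := by ring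
    _ ≤ h ^ 2 * (semiH4R u l r a b * semiH2R w l r a b) := by
        exact mul_le_mul_of_nonneg_left hAB (by positivity)
    _ = 1 * h ^ 2 * semiH4R u l r a b * semiH2R w l r a b := by ring
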